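/- Every cycle in the graph G, obtained from the Hamilton cycle v_0 v_1 ... v_{n-1} v_0 by adding chords v_0 v_{a_i} for indices 1 ≤ i ≤ k (with a_1 = 1, a_k = n-1), has length of the form a_j - a_i + 2 for some 1 ≤ i < j ≤ k. -/

import Mathlib

open SimpleGraph

/-- Decompose a walk of positive length into a first edge and the rest. -/
lemma walk_cons_of_pos {V : Type*} {G : SimpleGraph V} {x y : V} (p : G.Walk x y)
    (h : 0 < p.length) :
    ∃ (z : V) (h1 : G.Adj x z) (q : G.Walk z y), p = SimpleGraph.Walk.cons h1 q := by
  cases p with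
  | nil => simp at h
  | cons h1 q => exact ⟨_, h1, q, rfl⟩

/-- In a graph whose nonzero part is the path `1 - 2 - ⋯ - (n-1)`, a path avoiding `0`
has length the distance between the values of the endpoints, and its support hits every
value in between. -/
lemma path_len {n : ℕ} [NeZero n] {G : SimpleGraph (Fin n)}
    (hA : ∀ u v : Fin n, G.Adj u v → u ≠ 0 → v ≠ 0 → (v : ℕ) = (u : ℕ) + 1 ∨ (u : ℕ) = (v : ℕ) + 1)
    {x y : Fin n} (p : G.Walk x y) (hp : p.IsPath) (h0 : (0 : Fin n) ∉ p.support) :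
    p.length = max (x : ℕ) (y : ℕ) - min (x : ℕ) (y : ℕ) ∧
      ∀ m : ℕ, min (x : ℕ) (y : ℕ) ≤ m → m ≤ max (x : ℕ) (y : ℕ) →
        ∃ v ∈ p.support, (v : ℕ) = m := by
  induction p with
  | @nil u =>
    exact ⟨by simp, fun m hm1 hm2 => ⟨u, by simp, by omega⟩⟩
  | @cons u v w h p ih =>
    rw [SimpleGraph.Walk.support_cons, List.mem_cons] at h0
    push_neg at h0
    obtain ⟨hu0, h0'⟩ := h0
    rw [SimpleGraph.Walk.cons_isPath_iff] at hp
    obtain ⟨hp', hus⟩ := hp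
    have hv0 : v ≠ 0 := fun hv => h0' (hv ▸ p.start_mem_support)
    obtain ⟨hlen, hmem⟩ := ih hp' h0'
    have hadj := hA u v h (fun h => hu0 h.symm) (fun h => hv0 h)
    have hw0 : w ≠ 0 := fun hw => h0' (hw ▸ p.end_mem_support)
    rcases hadj with hadj | hadj
    · -- v = u + 1
      rcases Nat.lt_or_ge (w : ℕ) (v : ℕ) with hw | hw
      · -- w < v, so u ∈ [w, v]; contradiction
        obtain ⟨t, ht, htv⟩ := hmem (u : ℕ) (by omega) (by omega)
        exact absurd (Fin.val_injective htv ▸ ht) hus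
      · refine ⟨by simp only [SimpleGraph.Walk.length_cons, hlen]; omega,
          fun m hm1 hm2 => ?_⟩
        rcases eq_or_lt_of_le (show (u : ℕ) ≤ m by omega) with he | hl
        · exact ⟨u, by simp, he⟩
        · obtain ⟨t, ht, htv⟩ := hmem m (by omega) (by omega)
          exact ⟨t, by simp [ht], htv⟩
    · -- u = v + 1
      rcases Nat.lt_or_ge (v : ℕ) (w : ℕ) with hw | hw
      · -- v < w, so u ∈ [v, w]; contradiction
        obtain ⟨t, ht, htv⟩ := hmem (u : ℕ) (by omega) (by omega)
        exact absurd (Fin.val_injective htv ▸ ht) hus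
      · refine ⟨by simp only [SimpleGraph.Walk.length_cons, hlen]; omega,
          fun m hm1 hm2 => ?_⟩
        rcases eq_or_lt_of_le (show m ≤ (u : ℕ) by omega) with he | hl
        · exact ⟨u, by simp, he.symm⟩
        · obtain ⟨t, ht, htv⟩ := hmem m (by omega) (by omega)
          exact ⟨t, by simp [ht], htv⟩

/-- A finset of edges forms a cycle of the graph `G` if it is the edge set of some
cycle walk in `G`. -/
def IsCycleSet {V : Type*} [DecidableEq V] (G : SimpleGraph V) (s : Finset (Sym2 V)) : Prop :=
  ∃ (u : V) (w : G.Walk u u), w.IsCycle ∧ w.edges.toFinset = s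

/-- Every cycle of the graph obtained from the Hamilton cycle `v_0 v_1 ... v_{n-1} v_0`
by adding the chords `v_0 v_{a i}` (where `a 0 = 1` and `a (k-1) = n - 1`) has length
`a j - a i + 2` for some `i < j`. -/
theorem stmt1 (n k : ℕ) [NeZero n] (hn : 3 ≤ n) (hk : 2 ≤ k)
    (a : Fin k → Fin n) (hmono : StrictMono a)
    (h1 : (a ⟨0, by omega⟩ : ℕ) = 1) (hlast : (a ⟨k - 1, by omega⟩ : ℕ) = n - 1)
    (G : SimpleGraph (Fin n))
    (hG : G = SimpleGraph.fromEdgeSet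
      ({e | ∃ i : Fin n, e = s(i, i + 1)} ∪ {e | ∃ i : Fin k, e = s(0, a i)})) :
    ∀ s : Finset (Sym2 (Fin n)), IsCycleSet G s →
      ∃ i j : Fin k, i < j ∧ s.card = (a j : ℕ) - (a i : ℕ) + 2 := by
  have hone : ((1 : Fin n) : ℕ) = 1 := by
    rw [Fin.val_one']; exact Nat.mod_eq_of_lt (by omega)
  have hsucc : ∀ u : Fin n, ((u + 1 : Fin n) : ℕ) = ((u : ℕ) + 1) % n := by
    intro u; rw [Fin.val_add, hone]
  -- adjacency characterizations
  have hA : ∀ u v : Fin n, G.Adj u v → u ≠ 0 → v ≠ 0 →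
      (v : ℕ) = (u : ℕ) + 1 ∨ (u : ℕ) = (v : ℕ) + 1 := by
    subst hG
    intro u v h hu hv
    rw [SimpleGraph.fromEdgeSet_adj] at h
    obtain ⟨hmem, hne⟩ := h
    rcases hmem with ⟨i, hi⟩ | ⟨i, hi⟩
    · rw [Sym2.eq_iff] at hi
      rcases hi with ⟨hui, hvi⟩ | ⟨hui, hvi⟩
      · left
        have hiu : ((i + 1 : Fin n) : ℕ) = ((i : ℕ) + 1) % n := hsucc i
        rw [← hvi, ← hui] at hiu
        have hu' : (u : ℕ) < n := u.isLt
        rcases Nat.lt_or_ge ((u : ℕ) + 1) n with h' | h'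
        · rw [hiu, Nat.mod_eq_of_lt h']
        · have h'' : (u : ℕ) + 1 = n := by omega
          rw [h'', Nat.mod_self] at hiu
          exact absurd (Fin.ext (by simpa using hiu)) hv
      · right
        have hiu : ((i + 1 : Fin n) : ℕ) = ((i : ℕ) + 1) % n := hsucc i
        rw [← hui, ← hvi] at hiu
        have hv' : (v : ℕ) < n := v.isLt
        rcases Nat.lt_or_ge ((v : ℕ) + 1) n with h' | h'
        · rw [hiu, Nat.mod_eq_of_lt h']
        · have h'' : (v : ℕ) + 1 = n := by omega
          rw [h'', Nat.mod_self] at hiu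
          exact absurd (Fin.ext (by simpa using hiu)) hu
    · rw [Sym2.eq_iff] at hi
      rcases hi with ⟨hu0, _⟩ | ⟨_, hv0⟩
      · exact absurd hu0 hu
      · exact absurd hv0 hv
  have hB : ∀ z : Fin n, G.Adj 0 z → ∃ i : Fin k, z = a i := by
    subst hG
    intro z h
    rw [SimpleGraph.fromEdgeSet_adj] at h
    obtain ⟨hmem, hne⟩ := h
    rcases hmem with ⟨i, hi⟩ | ⟨i, hi⟩
    · rw [Sym2.eq_iff] at hi
      rcases hi with ⟨hi0, hzi⟩ | ⟨hi0, hzi⟩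
      · refine ⟨⟨0, by omega⟩, Fin.ext ?_⟩
        rw [h1, hzi, ← hi0]
        simpa using hone
      · refine ⟨⟨k - 1, by omega⟩, Fin.ext ?_⟩
        rw [hlast, hzi]
        have hiu : ((i + 1 : Fin n) : ℕ) = ((i : ℕ) + 1) % n := hsucc i
        rw [← hi0] at hiu
        have hiv := i.isLt
        simp only [Fin.val_zero] at hiu
        rcases Nat.lt_or_ge ((i : ℕ) + 1) n with h' | h'
        · rw [Nat.mod_eq_of_lt h'] at hiu; omega
        · omega
    · rw [Sym2.eq_iff] at hi
      rcases hi with ⟨_, hz⟩ | ⟨hz, hz0⟩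
      · exact ⟨i, hz⟩
      · exact absurd hz0.symm hne
  intro s hs
  obtain ⟨u, w, hc, hes⟩ := hs
  have h3 := hc.three_le_length
  -- 0 is in the support of w
  have h0 : (0 : Fin n) ∈ w.support := by
    by_contra h0
    obtain ⟨z, he, p, hw⟩ := walk_cons_of_pos w (by omega)
    subst hw
    rw [SimpleGraph.Walk.cons_isCycle_iff] at hc
    rw [SimpleGraph.Walk.support_cons, List.mem_cons] at h0
    push_neg at h0
    obtain ⟨hu0, h0'⟩ := h0
    have hz0 : z ≠ 0 := fun hz => h0' (hz ▸ p.start_mem_support)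
    obtain ⟨hlen, _⟩ := path_len hA p hc.1 h0'
    have := hA u z he (fun h => hu0 h.symm) (fun h => hz0 h)
    simp only [SimpleGraph.Walk.length_cons] at h3
    omega
  -- rotate the cycle to start at 0
  set w' := w.rotate 0 h0 with hw'
  have hc' : w'.IsCycle := hc.rotate h0
  have hsw : s = w'.edges.toFinset := by
    rw [← hes]
    exact (List.toFinset_eq_of_perm _ _ (SimpleGraph.Walk.rotate_edges w 0 h0).perm).symm
  have hcard : s.card = w'.length := by
    rw [hsw, List.toFinset_card_of_nodup hc'.edges_nodup, SimpleGraph.Walk.length_edges]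
  have h3' : 3 ≤ w'.length := hc'.three_le_length
  clear_value w'
  obtain ⟨z, he1, p, hw1⟩ := walk_cons_of_pos w' (by omega)
  subst hw1
  simp only [SimpleGraph.Walk.length_cons] at h3' hcard
  rw [SimpleGraph.Walk.cons_isCycle_iff] at hc'
  obtain ⟨hp, _⟩ := hc'
  have hz0 : z ≠ 0 := he1.ne'
  -- decompose the reverse of p
  obtain ⟨y, he2, q, hq⟩ := walk_cons_of_pos p.reverse
    (by rw [SimpleGraph.Walk.length_reverse]; omega)
  have hqp : q.IsPath ∧ (0 : Fin n) ∉ q.support := by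
    have hrp := hp.reverse
    rw [hq, SimpleGraph.Walk.cons_isPath_iff] at hrp
    exact hrp
  have hy0 : y ≠ 0 := he2.ne'
  obtain ⟨hlenq, _⟩ := path_len hA q hqp.1 hqp.2
  have hplen : p.length = q.length + 1 := by
    have hr := SimpleGraph.Walk.length_reverse p
    rw [hq] at hr
    simp only [SimpleGraph.Walk.length_cons] at hr
    omega
  obtain ⟨i, hi⟩ := hB z he1
  obtain ⟨j, hj⟩ := hB y he2
  have hyz : y ≠ z := by
    intro h
    subst h
    simp only [min_self, max_self, Nat.sub_self] at hlenq
    omega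
  have hij : i ≠ j := fun h => hyz (by rw [hi, hj, h])
  have hvi : (z : ℕ) = (a i : ℕ) := congrArg Fin.val hi
  have hvj : (y : ℕ) = (a j : ℕ) := congrArg Fin.val hj
  rcases lt_or_gt_of_ne hij with hlt | hlt
  · refine ⟨i, j, hlt, ?_⟩
    have hv : (a i : ℕ) < (a j : ℕ) := hmono hlt
    rw [hcard, hplen, hlenq]
    omega
  · refine ⟨j, i, hlt, ?_⟩
    have hv : (a j : ℕ) < (a i : ℕ) := hmono hlt
    rw [hcard, hplen, hlenq]
    omega
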